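/- Let (G, L) be a group with length function and (S, w) a G-set equipped with a weight function w : S → [0,∞) satisfying w(gs) ≤ C·L(g) + w(s) for all g ∈ G, s ∈ S and some constant C ≥ 1. For a non-decreasing function f : [0,∞) → (0,∞) define seminorms on finitely supported ℂ-valued functions by |a|_f = Σ_{g∈G} |a(g)|·f(L(g)) on ℂ[G] and |b|_f = Σ_{s∈S} |b(s)|·f(w(s)) on ℂ[S], and let |·|₁ denote the corresponding ℓ¹-norms (f ≡ 1). Let the module action of ℂ[G] on ℂ[S] be (a·b)(s) = Σ_{(g,s') : gs' = s} a(g)·b(s'). Then for every non-decreasing f₂ with f((C+1)x) ≤ f₂(x) for all x ≥ 0, one has |a·b|_f ≤ |a|₁·|b|_{f₂} + |a|_{f₂}·|b|₁ for all finitely supported a and b. -/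

import Mathlib

/-- The weighted `ℓ¹`-seminorm `|x|_f = Σ_z |x z| · f (w z)` on finitely supported
`ℂ`-valued functions on a weighted set `(Z, w)`. -/
noncomputable def wSeminorm {Z : Type*} (w : Z → ℝ) (f : ℝ → ℝ) (x : Z →₀ ℂ) : ℝ :=
  x.sum fun z c => ‖c‖ * f (w z)

/-- The module action of `ℂ[G]` on `ℂ[S]`: `(a · b) s = Σ_{g s' = s} a g * b s'`. -/
noncomputable def modAction {G : Type*} [Group G] {S : Type*} [MulAction G S]
    (a : G →₀ ℂ) (b : S →₀ ℂ) : S →₀ ℂ :=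
  a.sum fun g ag => b.sum fun s bs => Finsupp.single (g • s) (ag * bs)

lemma wSeminorm_eq {Z : Type*} (w : Z → ℝ) (f : ℝ → ℝ) (x : Z →₀ ℂ)
    (t : Finset Z) (h : x.support ⊆ t) :
    wSeminorm w f x = ∑ z ∈ t, ‖x z‖ * f (w z) :=
  Finsupp.sum_of_support_subset x h _ (fun z _ => by simp)

lemma wSeminorm_add_le {Z : Type*} (w : Z → ℝ) (f : ℝ → ℝ)
    (hf : ∀ z : Z, 0 ≤ f (w z)) (x y : Z →₀ ℂ) :
    wSeminorm w f (x + y) ≤ wSeminorm w f x + wSeminorm w f y := by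
  classical
  set t := x.support ∪ y.support with ht
  rw [wSeminorm_eq w f x t (Finset.subset_union_left),
      wSeminorm_eq w f y t (Finset.subset_union_right),
      wSeminorm_eq w f (x + y) t (Finsupp.support_add.trans (le_refl _)),
      ← Finset.sum_add_distrib]
  refine Finset.sum_le_sum fun z _ => ?_
  rw [← add_mul]
  exact mul_le_mul_of_nonneg_right (by simpa using norm_add_le (x z) (y z)) (hf z)

lemma wSeminorm_sum_le {Z : Type*} (w : Z → ℝ) (f : ℝ → ℝ)
    (hf : ∀ z : Z, 0 ≤ f (w z)) {ι : Type*} (t : Finset ι) (g : ι → Z →₀ ℂ) :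
    wSeminorm w f (∑ i ∈ t, g i) ≤ ∑ i ∈ t, wSeminorm w f (g i) := by
  classical
  induction t using Finset.induction_on with
  | empty => simp [wSeminorm]
  | insert _ _ hni ih =>
      rw [Finset.sum_insert hni, Finset.sum_insert hni]
      exact (wSeminorm_add_le w f hf _ _).trans (by linarith)

lemma wSeminorm_single {Z : Type*} (w : Z → ℝ) (f : ℝ → ℝ) (z : Z) (c : ℂ) :
    wSeminorm w f (Finsupp.single z c) = ‖c‖ * f (w z) := by
  unfold wSeminorm
  exact Finsupp.sum_single_index (by simp)

/-- for a group with length function `(G, L)` and a weighted `G`-set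
`(S, w)` with `w (g • s) ≤ C · L g + w s` (`C ≥ 1`), and for non-decreasing positive
`f, f₂` with `f ((C+1) x) ≤ f₂ x`, the module action satisfies
`|a · b|_f ≤ |a|₁ · |b|_{f₂} + |a|_{f₂} · |b|₁`. -/
theorem module_action_estimate
    {G : Type*} [Group G] (L : G → ℝ)
    (hL_nonneg : ∀ g : G, 0 ≤ L g)
    (hL_sub : ∀ g h : G, L (g * h) ≤ L g + L h)
    (hL_inv : ∀ g : G, L g⁻¹ = L g)
    {S : Type*} [MulAction G S] (w : S → ℝ)
    (hw_nonneg : ∀ s : S, 0 ≤ w s)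
    (C : ℝ) (hC : 1 ≤ C)
    (hweight : ∀ (g : G) (s : S), w (g • s) ≤ C * L g + w s)
    (f : ℝ → ℝ)
    (hf_mono : ∀ x y : ℝ, 0 ≤ x → x ≤ y → f x ≤ f y)
    (hf_pos : ∀ x : ℝ, 0 ≤ x → 0 < f x)
    (f₂ : ℝ → ℝ)
    (hf₂_mono : ∀ x y : ℝ, 0 ≤ x → x ≤ y → f₂ x ≤ f₂ y)
    (hf₂_pos : ∀ x : ℝ, 0 ≤ x → 0 < f₂ x)
    (hff₂ : ∀ x : ℝ, 0 ≤ x → f ((C + 1) * x) ≤ f₂ x) :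
    ∀ (a : G →₀ ℂ) (b : S →₀ ℂ),
      wSeminorm w f (modAction a b) ≤
        wSeminorm L (fun _ => 1) a * wSeminorm w f₂ b
          + wSeminorm L f₂ a * wSeminorm w (fun _ => 1) b := by
  intro a b
  have hfw : ∀ s : S, 0 ≤ f (w s) := fun s => (hf_pos _ (hw_nonneg s)).le
  have key : ∀ (g : G) (s : S), f (w (g • s)) ≤ f₂ (L g) + f₂ (w s) := by
    intro g s
    have hm : (0:ℝ) ≤ max (L g) (w s) := le_trans (hL_nonneg g) (le_max_left _ _)
    have h1 : w (g • s) ≤ (C + 1) * max (L g) (w s) := by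
      refine (hweight g s).trans ?_
      have := mul_le_mul_of_nonneg_left (le_max_left (L g) (w s)) (by linarith : (0:ℝ) ≤ C)
      have := le_max_right (L g) (w s)
      nlinarith [le_max_right (L g) (w s), mul_le_mul_of_nonneg_left (le_max_left (L g) (w s)) (by linarith : (0:ℝ) ≤ C)]
    have h2 : f (w (g • s)) ≤ f₂ (max (L g) (w s)) :=
      (hf_mono _ _ (hw_nonneg _) h1).trans (hff₂ _ hm)
    rcases le_total (L g) (w s) with h | h
    · rw [max_eq_right h] at h2
      linarith [hf₂_pos (L g) (hL_nonneg g)]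
    · rw [max_eq_left h] at h2
      linarith [hf₂_pos (w s) (hw_nonneg s)]
  calc wSeminorm w f (modAction a b)
      ≤ ∑ g ∈ a.support, wSeminorm w f
          (∑ s ∈ b.support, Finsupp.single (g • s) (a g * b s)) :=
        wSeminorm_sum_le w f hfw _ _
    _ ≤ ∑ g ∈ a.support, ∑ s ∈ b.support,
          ‖a g * b s‖ * f (w (g • s)) := by
        refine Finset.sum_le_sum fun g _ => ?_
        refine (wSeminorm_sum_le w f hfw _ _).trans ?_
        refine Finset.sum_le_sum fun s _ => ?_
        rw [wSeminorm_single]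
    _ ≤ ∑ g ∈ a.support, ∑ s ∈ b.support,
          ‖a g‖ * ‖b s‖ * (f₂ (L g) + f₂ (w s)) := by
        refine Finset.sum_le_sum fun g _ => Finset.sum_le_sum fun s _ => ?_
        rw [norm_mul]
        exact mul_le_mul_of_nonneg_left (key g s) (by positivity)
    _ = wSeminorm L (fun _ => 1) a * wSeminorm w f₂ b
          + wSeminorm L f₂ a * wSeminorm w (fun _ => 1) b := by
        rw [wSeminorm_eq L (fun _ => 1) a a.support le_rfl,
            wSeminorm_eq L f₂ a a.support le_rfl,
            wSeminorm_eq w f₂ b b.support le_rfl,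
            wSeminorm_eq w (fun _ => 1) b b.support le_rfl,
            Finset.sum_mul_sum, Finset.sum_mul_sum, ← Finset.sum_add_distrib]
        refine Finset.sum_congr rfl fun g _ => ?_
        rw [← Finset.sum_add_distrib]
        refine Finset.sum_congr rfl fun s _ => ?_
        ring
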